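/- Let T1 with weight w1 and T2 with weight w2 be weighted trees whose weights are strictly positive. Then the weighted trees T1(w1) and T2(w2) are isomorphic if and only if the metric spaces (V(T1), d_{w1}) and (V(T2), d_{w2}) are isometric. -/

import Mathlib

open SimpleGraph

noncomputable section

variable {V : Type*}

/-- The degree of a vertex of a graph. -/
def vdeg (G : SimpleGraph V) (v : V) : ℕ := Nat.card (G.neighborSet v)

/- The out-degree of a vertex `v` of the tree `G` rooted at `r`:
`δ⁺(v) = δ(v)` if `v = r` and `δ⁺(v) = δ(v) - 1` otherwise. -/
open Classical in
def outDeg (G : SimpleGraph V) (r v : V) : ℕ :=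
  if v = r then vdeg G v else vdeg G v - 1

/-- `v` is a direct successor of `u` in the tree `G` rooted at `r`:
`u` and `v` are adjacent and `u` lies on the path joining `v` and `r`. -/
def DirectSucc (G : SimpleGraph V) (r u v : V) : Prop :=
  G.Adj u v ∧ ∃ p : G.Walk v r, p.IsPath ∧ u ∈ p.support

/-- A labeling `l` of the tree `G` rooted at `r` is monotone if `l⁻¹(0) = V₀⁺(T)`
and `l v < l u` whenever `v` is a direct successor of `u`. -/
def MonotoneLabeling (G : SimpleGraph V) (r : V) (l : V → NNReal) : Prop :=
  (∀ v, l v = 0 ↔ outDeg G r v = 0) ∧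
    ∀ u v, DirectSucc G r u v → l v < l u

/-- A weight `w` on the tree `G` rooted at `r` is equidistant if it is strictly positive
on the edges and there is a constant `K` such that for every `u ∈ V₀⁺(T)`, the sum of
the weights of the edges of the path joining `r` and `u` equals `K`. -/
def EquidistantWeight (G : SimpleGraph V) (r : V) (w : Sym2 V → NNReal) : Prop :=
  (∀ e ∈ G.edgeSet, 0 < w e) ∧
    ∃ K : NNReal, ∀ u, outDeg G r u = 0 →
      ∀ p : G.Walk r u, p.IsPath → (p.edges.map w).sum = K

/-- `d` is a metric on the set `A`. -/
def IsMetricOn (d : V → V → NNReal) (A : Set V) : Prop :=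
  (∀ x ∈ A, ∀ y ∈ A, (d x y = 0 ↔ x = y)) ∧
  (∀ x ∈ A, ∀ y ∈ A, d x y = d y x) ∧
  (∀ x ∈ A, ∀ y ∈ A, ∀ z ∈ A, d x y ≤ d x z + d z y)

/-- `d` is an ultrametric on the set `A`: a metric satisfying the strong triangle
inequality. -/
def IsUltrametricOn (d : V → V → NNReal) (A : Set V) : Prop :=
  IsMetricOn d A ∧ ∀ x ∈ A, ∀ y ∈ A, ∀ z ∈ A, d x y ≤ max (d x z) (d z y)

section TreeMetricHelpers

variable {W : Type*} {G : SimpleGraph W} {w : Sym2 W → NNReal} {d : W → W → NNReal}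

lemma tm_dist_symm (hc : G.Connected)
    (hd : ∀ u v, ∀ p : G.Walk u v, p.IsPath → d u v = (p.edges.map w).sum)
    (u v : W) : d u v = d v u := by
  classical
  obtain ⟨p0⟩ := hc.preconnected u v
  rw [hd u v p0.toPath.1 p0.toPath.2, hd v u p0.toPath.1.reverse p0.toPath.2.reverse,
    SimpleGraph.Walk.edges_reverse, List.map_reverse, List.sum_reverse]

lemma tm_dist_pos (hc : G.Connected) (hwp : ∀ e ∈ G.edgeSet, 0 < w e)
    (hd : ∀ u v, ∀ p : G.Walk u v, p.IsPath → d u v = (p.edges.map w).sum)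
    {u v : W} (hne : u ≠ v) : 0 < d u v := by
  classical
  obtain ⟨p0⟩ := hc.preconnected u v
  rw [hd u v p0.toPath.1 p0.toPath.2]
  have hlen : p0.toPath.1.edges ≠ [] := by
    intro h
    apply hne
    apply SimpleGraph.Walk.eq_of_length_eq_zero
    rw [← SimpleGraph.Walk.length_edges, h]
    rfl
  obtain ⟨e, he⟩ := List.exists_mem_of_ne_nil _ hlen
  calc (0 : NNReal) < w e := hwp e (SimpleGraph.Walk.edges_subset_edgeSet _ he)
    _ ≤ _ := List.single_le_sum (fun x _ => zero_le) _ (List.mem_map_of_mem (f := w) he)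

lemma tm_dist_adj
    (hd : ∀ u v, ∀ p : G.Walk u v, p.IsPath → d u v = (p.edges.map w).sum)
    {u v : W} (h : G.Adj u v) : d u v = w s(u, v) := by
  have hp : (SimpleGraph.Walk.cons h SimpleGraph.Walk.nil).IsPath := by
    simp [SimpleGraph.Walk.cons_isPath_iff, h.ne]
  rw [hd u v _ hp]
  simp

lemma tm_dist_split
    (hd : ∀ u v, ∀ p : G.Walk u v, p.IsPath → d u v = (p.edges.map w).sum)
    {u v z : W} (p : G.Walk u v) (hp : p.IsPath) (hz : z ∈ p.support) :
    d u z + d z v = d u v := by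
  classical
  have hspec := SimpleGraph.Walk.take_spec p hz
  calc d u z + d z v
      = ((p.takeUntil z hz).edges.map w).sum + ((p.dropUntil z hz).edges.map w).sum := by
        rw [hd _ _ _ (hp.takeUntil hz), hd _ _ _ (hp.dropUntil hz)]
    _ = ((((p.takeUntil z hz).append (p.dropUntil z hz)).edges).map w).sum := by
        rw [SimpleGraph.Walk.edges_append, List.map_append, List.sum_append]
    _ = d u v := by rw [hspec, ← hd u v p hp]

lemma tm_adj_iff (hc : G.Connected) (hwp : ∀ e ∈ G.edgeSet, 0 < w e)
    (hd : ∀ u v, ∀ p : G.Walk u v, p.IsPath → d u v = (p.edges.map w).sum)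
    {u v : W} :
    G.Adj u v ↔ u ≠ v ∧ ∀ z, z ≠ u → z ≠ v → d u z + d z v ≠ d u v := by
  classical
  constructor
  · intro h
    refine ⟨h.ne, fun z hzu hzv heq => ?_⟩
    obtain ⟨p0⟩ := hc.preconnected u z
    obtain ⟨p, hp⟩ : ∃ p : G.Walk u z, p.IsPath := ⟨p0.toPath.1, p0.toPath.2⟩
    by_cases hv : v ∈ p.support
    · have h1 : d u v + d v z = d u z := tm_dist_split hd p hp hv
      have h2 : d z v = d v z := tm_dist_symm hc hd z v
      have hpos : 0 < d v z := tm_dist_pos hc hwp hd (fun e => hzv e.symm)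
      rw [h2, ← h1] at heq
      have heq' : d u v + (d v z + d v z) = d u v := by
        calc d u v + (d v z + d v z) = d u v + d v z + d v z := by ring
          _ = d u v := heq
      exact (lt_add_of_pos_right (d u v) (add_pos hpos hpos)).ne' heq'
    · have hp2 : (SimpleGraph.Walk.cons h.symm p).IsPath := hp.cons hv
      have hu : u ∈ (SimpleGraph.Walk.cons h.symm p).support := by
        rw [SimpleGraph.Walk.support_cons]
        exact List.mem_cons_of_mem _ p.start_mem_support
      have h1 : d v u + d u z = d v z := tm_dist_split hd _ hp2 hu
      have h2 : d z v = d v z := tm_dist_symm hc hd z v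
      have h3 : d v u = d u v := tm_dist_symm hc hd v u
      have hpos : 0 < d u z := tm_dist_pos hc hwp hd (fun e => hzu e.symm)
      rw [h2, ← h1, h3] at heq
      have heq' : d u v + (d u z + d u z) = d u v := by
        calc d u v + (d u z + d u z) = d u z + (d u v + d u z) := by ring
          _ = d u v := heq
      exact (lt_add_of_pos_right (d u v) (add_pos hpos hpos)).ne' heq'
  · rintro ⟨hne, hz⟩
    obtain ⟨p0⟩ := hc.preconnected u v
    obtain ⟨p, hp⟩ : ∃ p : G.Walk u v, p.IsPath := ⟨p0.toPath.1, p0.toPath.2⟩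
    cases p with
    | nil => exact absurd rfl hne
    | @cons _ b _ hadj q =>
      by_cases hbv : b = v
      · subst hbv; exact hadj
      · exfalso
        have hq : q.IsPath := hp.of_cons
        apply hz b hadj.ne' hbv
        rw [tm_dist_adj hd hadj, hd b v q hq, hd u v _ hp]
        simp

end TreeMetricHelpers

/-- Weighted trees `T₁(w₁)` and `T₂(w₂)` with strictly positive weights are
isomorphic if and only if the metric spaces `(V(T₁), d_{w₁})` and `(V(T₂), d_{w₂})` are
isometric. -/
theorem stmt2_weighted_trees_isomorphic_iff_isometric
    {V1 V2 : Type*} [Fintype V1] [Fintype V2]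
    (G1 : SimpleGraph V1) (G2 : SimpleGraph V2)
    (hG1 : G1.IsTree) (hG2 : G2.IsTree)
    (w1 : Sym2 V1 → NNReal) (w2 : Sym2 V2 → NNReal)
    (hw1 : ∀ e ∈ G1.edgeSet, 0 < w1 e) (hw2 : ∀ e ∈ G2.edgeSet, 0 < w2 e)
    (d1 : V1 → V1 → NNReal) (d2 : V2 → V2 → NNReal)
    (hd1 : ∀ u v, ∀ p : G1.Walk u v, p.IsPath → d1 u v = (p.edges.map w1).sum)
    (hd2 : ∀ u v, ∀ p : G2.Walk u v, p.IsPath → d2 u v = (p.edges.map w2).sum) :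
    (∃ f : V1 ≃ V2, (∀ u v, G1.Adj u v ↔ G2.Adj (f u) (f v)) ∧
        ∀ u v, G1.Adj u v → w2 s(f u, f v) = w1 s(u, v)) ↔
      (∃ f : V1 ≃ V2, ∀ x y, d2 (f x) (f y) = d1 x y) := by
  classical
  constructor
  · rintro ⟨f, hadj, hwp⟩
    refine ⟨f, fun x y => ?_⟩
    obtain ⟨p0⟩ := hG1.isConnected.preconnected x y
    obtain ⟨p, hp⟩ : ∃ p : G1.Walk x y, p.IsPath := ⟨p0.toPath.1, p0.toPath.2⟩
    let φ : G1 →g G2 := ⟨f, fun {a b} h => (hadj a b).1 h⟩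
    have hp2 : (p.map φ).IsPath := p.map_isPath_of_injective f.injective hp
    have key : d2 (f x) (f y) = ((p.map φ).edges.map w2).sum := hd2 (f x) (f y) (p.map φ) hp2
    rw [key, hd1 _ _ _ hp, SimpleGraph.Walk.edges_map, List.map_map]
    congr 1
    apply List.map_congr_left
    intro e he
    have heE := p.edges_subset_edgeSet he
    revert heE
    refine Sym2.ind (fun a b heE => ?_) e
    simp only [Function.comp_apply, Sym2.map_pair_eq]
    exact hwp a b (G1.mem_edgeSet.mp heE)
  · rintro ⟨f, hf⟩
    have hadj : ∀ u v, G1.Adj u v ↔ G2.Adj (f u) (f v) := by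
      intro u v
      rw [tm_adj_iff hG1.isConnected hw1 hd1, tm_adj_iff hG2.isConnected hw2 hd2]
      constructor
      · rintro ⟨hne, h⟩
        refine ⟨fun e => hne (f.injective e), fun z hzu hzv heq => ?_⟩
        obtain ⟨z', rfl⟩ : ∃ z', f z' = z := ⟨f.symm z, f.apply_symm_apply z⟩
        rw [hf, hf, hf] at heq
        exact h z' (fun e => hzu (congrArg f e)) (fun e => hzv (congrArg f e)) heq
      · rintro ⟨hne, h⟩
        refine ⟨fun e => hne (congrArg f e), fun z hzu hzv heq => ?_⟩
        have := h (f z) (fun e => hzu (f.injective e)) (fun e => hzv (f.injective e))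
        rw [hf, hf, hf] at this
        exact this heq
    refine ⟨f, hadj, fun u v h => ?_⟩
    calc w2 s(f u, f v) = d2 (f u) (f v) := (tm_dist_adj hd2 ((hadj u v).mp h)).symm
      _ = d1 u v := hf u v
      _ = w1 s(u, v) := tm_dist_adj hd1 h
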